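/- Let N be a Petri net with basis partition π = (T_E, T_I) such that no implicit transition shares an input place with any transition in T_conf (i.e., T_I is non-conflicting). Let M_b be a marking, t ∈ T_E an explicit transition, and y_min a minimal explanation vector of t at M_b. Then for any implicit firing vector y ≥ y_min with M = M_b + C_I·y ≥ 0, transition t is enabled at M. -/

import Mathlib

/-- A Petri net with `m` places and `n` transitions. -/
structure PetriNet (m n : ℕ) where
  Pre : Fin m → Fin n → ℕ
  Post : Fin m → Fin n → ℕ

namespace PetriNet

variable {m n : ℕ}

/-- Incidence matrix `C = Post - Pre`. -/
def C (N : PetriNet m n) (p : Fin m) (t : Fin n) : ℤ :=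
  (N.Post p t : ℤ) - (N.Pre p t : ℤ)

/-- Transition `t` is enabled at marking `M`. -/
def enabled (N : PetriNet m n) (M : Fin m → ℕ) (t : Fin n) : Prop :=
  ∀ p, N.Pre p t ≤ M p

/-- Firing transition `t` at marking `M`. -/
def fire (N : PetriNet m n) (M : Fin m → ℕ) (t : Fin n) : Fin m → ℕ :=
  fun p => M p + N.Post p t - N.Pre p t

/-- `fires N M σ M'` : the sequence `σ` is firable at `M` and yields `M'`. -/
inductive fires (N : PetriNet m n) : (Fin m → ℕ) → List (Fin n) → (Fin m → ℕ) → Prop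
  | nil (M : Fin m → ℕ) : fires N M [] M
  | cons {M M' : Fin m → ℕ} {t : Fin n} {σ : List (Fin n)} :
      N.enabled M t → fires N (N.fire M t) σ M' → fires N M (t :: σ) M'

/-- Firing vector of a sequence. -/
def fvec (σ : List (Fin n)) : Fin n → ℕ := fun t => σ.count t

/-- Arcs of the subnet induced by transition set `TI` (full net for `TI = Set.univ`). -/
def arc (N : PetriNet m n) (TI : Set (Fin n)) :
    (Fin m ⊕ Fin n) → (Fin m ⊕ Fin n) → Prop
  | Sum.inl p, Sum.inr t => t ∈ TI ∧ 0 < N.Pre p t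
  | Sum.inr t, Sum.inl p => t ∈ TI ∧ 0 < N.Post p t
  | _, _ => False

/-- The subnet induced by `TI` is acyclic: no directed cycle. -/
def SubnetAcyclic (N : PetriNet m n) (TI : Set (Fin n)) : Prop :=
  ∀ x, ¬ Relation.TransGen (N.arc TI) x x

/-- Transitions in structural conflict. -/
def Tconf (N : PetriNet m n) : Set (Fin n) :=
  {t | ∃ p, 0 < N.Pre p t ∧ ∃ t', t' ≠ t ∧ 0 < N.Pre p t'}

/-- `TI` is non-conflicting: `TI ⊆ T \ T_conf`. -/
def NonConflicting (N : PetriNet m n) (TI : Set (Fin n)) : Prop :=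
  ∀ t ∈ TI, t ∉ N.Tconf

/-- `TI` is non-increasing w.r.t. the GMEC weight vector `w`. -/
def NonIncreasing (N : PetriNet m n) (w : Fin m → ℤ) (TI : Set (Fin n)) : Prop :=
  ∀ t ∈ TI, ∑ p, w p * N.C p t ≤ 0

/-- The `TI`-induced subnet is conflict-free: every place has at most one
output transition among `TI`. -/
def ConflictFreeSubnet (N : PetriNet m n) (TI : Set (Fin n)) : Prop :=
  ∀ p : Fin m, ∀ t ∈ TI, ∀ t' ∈ TI, 0 < N.Pre p t → 0 < N.Pre p t' → t = t'

/-- `σ` consists only of transitions in `TI`. -/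
def ImplicitSeq (TI : Set (Fin n)) (σ : List (Fin n)) : Prop := ∀ t ∈ σ, t ∈ TI

/-- Implicit reach of a marking `Mb`. -/
def RI (N : PetriNet m n) (TI : Set (Fin n)) (Mb : Fin m → ℕ) : Set (Fin m → ℕ) :=
  {M | ∃ σ, ImplicitSeq TI σ ∧ N.fires Mb σ M}

/-- Reachability set. -/
def Reach (N : PetriNet m n) (M0 : Fin m → ℕ) : Set (Fin m → ℕ) :=
  {M | ∃ σ, N.fires M0 σ M}

/-- State equation `M' = M + C·y` (the nonnegativity `M' ≥ 0` is implicit in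
`M' : Fin m → ℕ`). -/
def stateEq (N : PetriNet m n) (M : Fin m → ℕ) (y : Fin n → ℕ) (M' : Fin m → ℕ) : Prop :=
  ∀ p, (M' p : ℤ) = (M p : ℤ) + ∑ t, N.C p t * (y t : ℤ)

/-- `σ` is an explanation of `t` at `M`: an implicit sequence after which `t`
is enabled. -/
def IsExplanation (N : PetriNet m n) (TI : Set (Fin n)) (M : Fin m → ℕ)
    (t : Fin n) (σ : List (Fin n)) : Prop :=
  ImplicitSeq TI σ ∧ ∃ M', N.fires M σ M' ∧ N.enabled M' t

/-- `y` is a minimal explanation vector of `t` at `M`. -/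
def MinExplVec (N : PetriNet m n) (TI : Set (Fin n)) (M : Fin m → ℕ)
    (t : Fin n) (y : Fin n → ℕ) : Prop :=
  (∃ σ, N.IsExplanation TI M t σ ∧ fvec σ = y) ∧
    ∀ σ', N.IsExplanation TI M t σ' → ¬ fvec σ' < y

/-- `y` is the firing vector of some implicit sequence firable at `M`. -/
def FirableVec (N : PetriNet m n) (TI : Set (Fin n)) (M : Fin m → ℕ)
    (y : Fin n → ℕ) : Prop :=
  ∃ σ M', ImplicitSeq TI σ ∧ fvec σ = y ∧ N.fires M σ M'

/-- `y` is a maximal implicit firing vector at `M`. -/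
def MaximalIFV (N : PetriNet m n) (TI : Set (Fin n)) (M : Fin m → ℕ)
    (y : Fin n → ℕ) : Prop :=
  N.FirableVec TI M y ∧ ∀ y', N.FirableVec TI M y' → ¬ y < y'

/-- `y` is the maximal implicit firing vector at `M`, dominating all others. -/
def GreatestIFV (N : PetriNet m n) (TI : Set (Fin n)) (M : Fin m → ℕ)
    (y : Fin n → ℕ) : Prop :=
  N.FirableVec TI M y ∧ ∀ y', N.FirableVec TI M y' → y' ≤ y

/-- One step of the BRG: fire a minimal explanation followed by an explicit
transition `t ∉ TI`. -/
def BRGstep (N : PetriNet m n) (TI : Set (Fin n)) (M1 M2 : Fin m → ℕ) : Prop :=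
  ∃ t ∉ TI, ∃ y, N.MinExplVec TI M1 t y ∧
    ∀ p, (M2 p : ℤ) = (M1 p : ℤ) + (∑ s, N.C p s * (y s : ℤ)) + N.C p t

/-- `Mb` is a basis marking of the BRG with initial marking `M0`. -/
def Basis (N : PetriNet m n) (TI : Set (Fin n)) (M0 Mb : Fin m → ℕ) : Prop :=
  Relation.ReflTransGen (N.BRGstep TI) M0 Mb

/-- A marking is dead if it enables no transition. -/
def Dead (N : PetriNet m n) (M : Fin m → ℕ) : Prop := ∀ t, ¬ N.enabled M t

/-- Final markings of the GMEC `(w, k)`. -/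
def Final (w : Fin m → ℤ) (k : ℤ) (M : Fin m → ℕ) : Prop :=
  ∑ p, w p * (M p : ℤ) ≤ k

/-- The plant is non-blocking. -/
def NonBlocking (N : PetriNet m n) (M0 : Fin m → ℕ) (w : Fin m → ℤ) (k : ℤ) : Prop :=
  ∀ M ∈ N.Reach M0, ∃ M' ∈ N.Reach M, Final w k M'

/-- Boundedness of the marked net. -/
def Bounded (N : PetriNet m n) (M0 : Fin m → ℕ) : Prop :=
  ∃ K, ∀ M ∈ N.Reach M0, ∀ p, M p ≤ K

end PetriNet

open PetriNet

lemma fires_state_eq {m n : ℕ} (N : PetriNet m n) {M M' : Fin m → ℕ} {σ : List (Fin n)}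
    (h : N.fires M σ M') :
    ∀ p, (M' p : ℤ) = (M p : ℤ) + ∑ s, N.C p s * (σ.count s : ℤ) := by
  induction h with
  | nil M => intro p; simp
  | @cons M M' t σ hen hf ih =>
    intro p
    have hfire : ((N.fire M t) p : ℤ) = (M p : ℤ) + N.Post p t - N.Pre p t := by
      have hle : N.Pre p t ≤ M p + N.Post p t := le_trans (hen p) (Nat.le_add_right _ _)
      unfold PetriNet.fire
      push_cast [Nat.cast_sub hle]
      ring
    have hsum : ∑ s, N.C p s * (((t :: σ).count s : ℕ) : ℤ)
        = (∑ s, N.C p s * (σ.count s : ℤ)) + N.C p t := by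
      have : ∀ s : Fin n, N.C p s * (((t :: σ).count s : ℕ) : ℤ)
          = N.C p s * (σ.count s : ℤ) + (if s = t then N.C p t else 0) := by
        intro s
        by_cases hs : s = t
        · subst hs; simp [List.count_cons]; ring
        · simp [List.count_cons, hs, Ne.symm hs]
      rw [Finset.sum_congr rfl fun s _ => this s, Finset.sum_add_distrib]
      simp
    rw [hsum, ih p, hfire]
    unfold PetriNet.C
    ring

/-- if `t` has minimal explanation vector `y_min` at `M_b` and
`y ≥ y_min` is an implicit firing vector with `M = M_b + C_I·y ≥ 0`, then `t`
is enabled at `M`. -/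
theorem enabled_of_ge_min_explanation {m n : ℕ} (N : PetriNet m n) (TI : Set (Fin n))
    (hacyc : N.SubnetAcyclic TI) (hnc : N.NonConflicting TI)
    (Mb M : Fin m → ℕ) (t : Fin n) (ht : t ∉ TI)
    (ymin y : Fin n → ℕ)
    (hmin : N.MinExplVec TI Mb t ymin)
    (hsupp : ∀ s ∉ TI, y s = 0)
    (hge : ymin ≤ y)
    (hM : N.stateEq Mb y M) :
    N.enabled M t := by
  obtain ⟨⟨σ, ⟨hσTI, M', hfM', henM'⟩, hfvec⟩, -⟩ := hmin
  intro p
  rcases Nat.eq_zero_or_pos (N.Pre p t) with h0 | hpt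
  · simp [h0]
  · have key : ∀ s ∈ TI, N.Pre p s = 0 := by
      intro s hs
      by_contra hne
      exact hnc s hs ⟨p, Nat.pos_of_ne_zero hne, t, fun h => ht (h ▸ hs), hpt⟩
    have hterm : ∀ s, N.C p s * (ymin s : ℤ) ≤ N.C p s * (y s : ℤ) := by
      intro s
      rcases eq_or_lt_of_le (hge s) with heq | hlt
      · rw [heq]
      · have hy : y s ≠ 0 := (Nat.lt_of_le_of_lt (Nat.zero_le _) hlt).ne'
        have hsTI : s ∈ TI := by by_contra h; exact hy (hsupp s h)
        have hC : 0 ≤ N.C p s := by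
          unfold PetriNet.C; rw [key s hsTI]; simp
        exact mul_le_mul_of_nonneg_left (by exact_mod_cast hge s) hC
    have hstate := fires_state_eq N hfM' p
    have hen' : (N.Pre p t : ℤ) ≤ (M' p : ℤ) := by exact_mod_cast henM' p
    have hcount : ∀ s : Fin n, (σ.count s : ℤ) = (ymin s : ℤ) := by
      intro s; rw [← hfvec]; rfl
    have hfin : (N.Pre p t : ℤ) ≤ (M p : ℤ) := by
      rw [hM p]
      calc (N.Pre p t : ℤ) ≤ (M' p : ℤ) := hen'
        _ = (Mb p : ℤ) + ∑ s, N.C p s * (ymin s : ℤ) := by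
            rw [hstate]; congr 1; exact Finset.sum_congr rfl fun s _ => by rw [hcount]
        _ ≤ (Mb p : ℤ) + ∑ s, N.C p s * (y s : ℤ) := by
            have := Finset.sum_le_sum (fun s _ => hterm s) (s := Finset.univ)
            linarith
    exact_mod_cast hfin
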